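/- Let B and D be two orthogonal projectors on ℝ^N with ‖B D^c‖₂ < 1, where D^c := I − D. If Bx = x and B·D·B·x = 0, then x = 0. Equivalently, no eigenvector of B·D·B associated with the eigenvalue 0 is bandlimited, and rank(B·D·B) = rank(B), so the eigenvectors of B·D·B with nonzero eigenvalues span the range of B. -/

import Mathlib

open Matrix

/-- The spectral norm of a real `N × N` matrix: the operator norm of the induced
linear map on `ℝ^N` with the Euclidean norm. -/
noncomputable def matSpectralNorm {N : ℕ} (M : Matrix (Fin N) (Fin N) ℝ) : ℝ :=
  ‖Matrix.toEuclideanCLM (𝕜 := ℝ) M‖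

/-- Let `B` and `D` be orthogonal projectors on `ℝ^N` with `‖B D^c‖₂ < 1`, `D^c := I − D`.
If `Bx = x` and `B·D·B·x = 0` then `x = 0`: no eigenvector of `B·D·B` with eigenvalue `0`
is bandlimited. Moreover `rank (B·D·B) = rank B`, so the eigenvectors of `B·D·B` with
nonzero eigenvalues span the range of `B`. -/
theorem no_bandlimited_kernel_vector_and_rank
    {N : ℕ} (B D : Matrix (Fin N) (Fin N) ℝ)
    (hBsym : B.transpose = B) (hDsym : D.transpose = D)
    (hBidem : B * B = B) (hDidem : D * D = D)
    (hnorm : matSpectralNorm (B * (1 - D)) < 1) :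
    (∀ x : Fin N → ℝ, B.mulVec x = x → (B * D * B).mulVec x = 0 → x = 0) ∧
      (B * D * B).rank = B.rank := by
  have key : ∀ x : Fin N → ℝ, B.mulVec x = x → (B * D * B).mulVec x = 0 → x = 0 := by
    intro x hBx h0
    -- First: D.mulVec x = 0
    have hDx : D.mulVec x = 0 := by
      have e1 : (B * D * B).mulVec x = B.mulVec (D.mulVec x) := by
        rw [← Matrix.mulVec_mulVec, ← Matrix.mulVec_mulVec, hBx]
      have e2 : D.mulVec x = D.mulVec (D.mulVec x) := by
        rw [Matrix.mulVec_mulVec, hDidem]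
      have h1 : x ⬝ᵥ (B * D * B).mulVec x = (D.mulVec x) ⬝ᵥ (D.mulVec x) := by
        rw [e1, Matrix.dotProduct_mulVec, ← hBsym, Matrix.vecMul_transpose, hBx]
        conv_lhs => rw [e2, Matrix.dotProduct_mulVec, ← hDsym, Matrix.vecMul_transpose]
        rw [hDsym]
      rw [h0, dotProduct_zero] at h1
      exact (dotProduct_self_eq_zero.mp h1.symm)
    -- x = (B * (1 - D)).mulVec x
    have hx : (B * (1 - D)).mulVec x = x := by
      rw [← Matrix.mulVec_mulVec, Matrix.sub_mulVec, Matrix.one_mulVec, hDx, sub_zero, hBx]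
    -- Pass to EuclideanSpace
    set y : EuclideanSpace ℝ (Fin N) := (WithLp.equiv 2 (Fin N → ℝ)).symm x with hy
    have hyx : Matrix.toEuclideanCLM (𝕜 := ℝ) (B * (1 - D)) y = y := by
      rw [hy, WithLp.equiv_symm_apply, Matrix.toEuclideanCLM_toLp, hx]
    have hle : ‖y‖ ≤ matSpectralNorm (B * (1 - D)) * ‖y‖ := by
      calc ‖y‖ = ‖Matrix.toEuclideanCLM (𝕜 := ℝ) (B * (1 - D)) y‖ := by rw [hyx]
        _ ≤ matSpectralNorm (B * (1 - D)) * ‖y‖ :=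
          (Matrix.toEuclideanCLM (𝕜 := ℝ) (B * (1 - D))).le_opNorm y
    have hy0 : y = 0 := by
      by_contra hne
      have hpos : 0 < ‖y‖ := norm_pos_iff.mpr hne
      nlinarith [hle, hpos, hnorm]
    have : x = (WithLp.equiv 2 (Fin N → ℝ)) y := by rw [hy]; simp
    rw [this, hy0]; simp
  refine ⟨key, le_antisymm ?_ ?_⟩
  · exact Matrix.rank_mul_le_right _ _
  · -- rank B ≤ rank (B*D*B)
    classical
    let f : (Fin N → ℝ) →ₗ[ℝ] (Fin N → ℝ) := (B * D * B).mulVecLin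
    let S : Submodule ℝ (Fin N → ℝ) := LinearMap.range B.mulVecLin
    let g : S →ₗ[ℝ] (Fin N → ℝ) := f.domRestrict S
    have hginj : Function.Injective g := by
      rw [← LinearMap.ker_eq_bot, LinearMap.ker_eq_bot']
      intro ⟨v, hv⟩ hgv
      obtain ⟨u, hu⟩ := hv
      have hBv : B.mulVec v = v := by
        rw [← hu]; simp only [Matrix.mulVecLin_apply] at *
        rw [Matrix.mulVec_mulVec, hBidem]
      have : v = 0 := key v hBv hgv
      exact Subtype.ext this
    have h1 : Module.finrank ℝ (LinearMap.range g) = Module.finrank ℝ S :=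
      LinearMap.finrank_range_of_inj hginj
    have h2 : LinearMap.range g ≤ LinearMap.range f := by
      rintro _ ⟨⟨v, hv⟩, rfl⟩; exact ⟨v, rfl⟩
    calc B.rank = Module.finrank ℝ S := rfl
      _ = Module.finrank ℝ (LinearMap.range g) := h1.symm
      _ ≤ Module.finrank ℝ (LinearMap.range f) := Submodule.finrank_mono h2
      _ = (B * D * B).rank := rfl
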